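/- With the setup of the preceding statement, if for some index i the bracket {λᵢ, μᵢ} ≠ 0 in S, then F and G do not star-commute: F*G ≠ G*F in Mₙ(S[[h]]). -/

import Mathlib

open PowerSeries

lemma star_coeff_one_aux {S : Type*} [CommRing S]
    (star : PowerSeries S → PowerSeries S → PowerSeries S)
    (haddl : ∀ u v w, star (u + v) w = star u w + star v w)
    (haddr : ∀ u v w, star u (v + w) = star u v + star u w)
    (hXl : ∀ u v, star (PowerSeries.X * u) v = PowerSeries.X * star u v)
    (hXr : ∀ u v, star u (PowerSeries.X * v) = PowerSeries.X * star u v)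
    (hmod : ∀ u v, PowerSeries.constantCoeff (R := S) (star u v) =
      PowerSeries.constantCoeff (R := S) u * PowerSeries.constantCoeff (R := S) v)
    (p q : PowerSeries S) :
    PowerSeries.coeff (R := S) 1 (star p q) =
      PowerSeries.coeff (R := S) 1 (star (PowerSeries.C (R := S) (PowerSeries.constantCoeff (R := S) p))
        (PowerSeries.C (R := S) (PowerSeries.constantCoeff (R := S) q))) +
      PowerSeries.coeff (R := S) 1 p * PowerSeries.constantCoeff (R := S) q +
      PowerSeries.constantCoeff (R := S) p * PowerSeries.coeff (R := S) 1 q := by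
  obtain ⟨u, hu⟩ : (X : PowerSeries S) ∣ (p - C (R := S) (constantCoeff (R := S) p)) := by
    rw [X_dvd_iff]; simp
  obtain ⟨v, hv⟩ : (X : PowerSeries S) ∣ (q - C (R := S) (constantCoeff (R := S) q)) := by
    rw [X_dvd_iff]; simp
  have hp : p = C (R := S) (constantCoeff (R := S) p) + X * u := by
    rw [← hu]; ring
  have hq : q = C (R := S) (constantCoeff (R := S) q) + X * v := by
    rw [← hv]; ring
  have hcp : coeff (R := S) 1 p = constantCoeff (R := S) u := by
    rw [hp]; simp [coeff_succ_X_mul 0, coeff_C]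
  have hcq : coeff (R := S) 1 q = constantCoeff (R := S) v := by
    rw [hq]; simp [coeff_succ_X_mul 0, coeff_C]
  conv_lhs => rw [hp, hq]
  rw [haddl, haddr, haddr, hXl, hXl, hXr, map_add, map_add, map_add]
  rw [show (1 : ℕ) = 0 + 1 from rfl, coeff_succ_X_mul, coeff_succ_X_mul, coeff_succ_X_mul]
  simp only [coeff_zero_eq_constantCoeff, hmod, hcp, hcq]
  simp [mul_comm]
  ring

theorem matrix_star_noncommute_of_bracket_ne_zero {k S : Type*} [Field k] [CommRing S] [Algebra k S]
    {n : ℕ}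
    (star : PowerSeries S → PowerSeries S → PowerSeries S)
    (hassoc : ∀ u v w, star (star u v) w = star u (star v w))
    (haddl : ∀ u v w, star (u + v) w = star u w + star v w)
    (haddr : ∀ u v w, star u (v + w) = star u v + star u w)
    (hXl : ∀ u v, star (PowerSeries.X * u) v = PowerSeries.X * star u v)
    (hXr : ∀ u v, star u (PowerSeries.X * v) = PowerSeries.X * star u v)
    (hmod : ∀ u v, PowerSeries.constantCoeff (R := S) (star u v) =
      PowerSeries.constantCoeff (R := S) u * PowerSeries.constantCoeff (R := S) v)
    (F G : Matrix (Fin n) (Fin n) (PowerSeries S))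
    (lam mu : Fin n → S) (EF EG : Matrix (Fin n) (Fin n) S)
    (hEF : ∀ i, EF i i = 0) (hEG : ∀ i, EG i i = 0)
    (hF0 : ∀ i j, PowerSeries.coeff (R := S) 0 (F i j) = if i = j then lam i else 0)
    (hG0 : ∀ i j, PowerSeries.coeff (R := S) 0 (G i j) = if i = j then mu i else 0)
    (hF1 : ∀ i j, PowerSeries.coeff (R := S) 1 (F i j) = EF i j)
    (hG1 : ∀ i j, PowerSeries.coeff (R := S) 1 (G i j) = EG i j)
    (matStar : Matrix (Fin n) (Fin n) (PowerSeries S) →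
      Matrix (Fin n) (Fin n) (PowerSeries S) → Matrix (Fin n) (Fin n) (PowerSeries S))
    (hmatStar : ∀ A B i j, matStar A B i j = ∑ l, star (A i l) (B l j))
    (hne : ∃ i, PowerSeries.coeff (R := S) 1
        (star (PowerSeries.C (R := S) (lam i)) (PowerSeries.C (R := S) (mu i)) -
          star (PowerSeries.C (R := S) (mu i)) (PowerSeries.C (R := S) (lam i))) ≠ 0) :
    matStar F G ≠ matStar G F := by
  obtain ⟨i, hi⟩ := hne
  intro heq
  apply hi
  have hstar0 : ∀ w, star 0 w = 0 := by
    intro w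
    have h := haddl 0 0 w
    rw [add_zero] at h
    exact (add_eq_right.mp h.symm)
  have h1 : (∑ l, star (F i l) (G l i)) = ∑ l, star (G i l) (F l i) := by
    rw [← hmatStar, ← hmatStar, heq]
  have h2 := congrArg (coeff (R := S) 1) h1
  rw [map_sum, map_sum] at h2
  have c0F : ∀ a b : Fin n, constantCoeff (R := S) (F a b) = if a = b then lam a else 0 := by
    intro a b; rw [← coeff_zero_eq_constantCoeff_apply]; exact hF0 a b
  have c0G : ∀ a b : Fin n, constantCoeff (R := S) (G a b) = if a = b then mu a else 0 := by
    intro a b; rw [← coeff_zero_eq_constantCoeff_apply]; exact hG0 a b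
  have hA : ∀ l, coeff (R := S) 1 (star (F i l) (G l i)) =
      if l = i then coeff (R := S) 1 (star (C (R := S) (lam i)) (C (R := S) (mu i))) else 0 := by
    intro l
    rw [star_coeff_one_aux star haddl haddr hXl hXr hmod]
    by_cases h : l = i
    · subst h; simp [c0F, c0G, hF1, hG1, hEF, hEG]
    · have h' : ¬ (i = l) := fun hh => h hh.symm
      simp [c0F, c0G, h, h', hF1, hG1, hstar0]
  have hB : ∀ l, coeff (R := S) 1 (star (G i l) (F l i)) =
      if l = i then coeff (R := S) 1 (star (C (R := S) (mu i)) (C (R := S) (lam i))) else 0 := by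
    intro l
    rw [star_coeff_one_aux star haddl haddr hXl hXr hmod]
    by_cases h : l = i
    · subst h; simp [c0F, c0G, hF1, hG1, hEF, hEG]
    · have h' : ¬ (i = l) := fun hh => h hh.symm
      simp [c0F, c0G, h, h', hF1, hG1, hstar0]
  simp only [hA, hB, Finset.sum_ite_eq', Finset.mem_univ, if_true] at h2
  rw [map_sub, h2, sub_self]
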